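/- Let G be a finite graph in which every vertex has degree 2 or 3, no two degree-2 vertices are adjacent, every degree-3 vertex has at most one degree-2 neighbor, and every degree-2 vertex has at least two special 3-vertices at distance exactly 2 (where a special 3-vertex is a degree-3 vertex all of whose neighbors have degree 3). Then mad(G) ≥ 30/11; in particular, 2|E(G)| ≥ (30/11)|V(G)|. -/

import Mathlib

/-- `mad(G) < r` : every nonempty subgraph `H` satisfies `2|E(H)|/|V(H)| < r`. -/
def MadLT {V : Type*} [Fintype V] (G : SimpleGraph V) (r : ℚ) : Prop :=
  ∀ H : G.Subgraph, H.verts.Nonempty →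
    2 * (H.edgeSet.ncard : ℚ) < r * H.verts.ncard

open Finset

private lemma ncard_eq_filter_card {V : Type*} [Fintype V] [DecidableEq V]
    (p : V → Prop) [DecidablePred p] :
    {x | p x}.ncard = (Finset.univ.filter p).card := by
  rw [Set.ncard_eq_toFinset_card']
  congr 1
  ext x
  simp

private lemma exists_mid {V : Type*} (G : SimpleGraph V) {x u : V}
    (h : G.dist x u = 2) : ∃ w, G.Adj x w ∧ G.Adj w u := by
  have hne : G.dist x u ≠ 0 := by omega
  obtain ⟨p, hp⟩ := G.exists_walk_of_dist_ne_zero hne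
  rw [h] at hp
  cases p with
  | nil => simp at hp
  | cons h1 q =>
    cases q with
    | nil => simp at hp
    | cons h2 r =>
      cases r with
      | nil => exact ⟨_, h1, h2⟩
      | cons h3 s => simp [SimpleGraph.Walk.length_cons] at hp

private lemma main_count {V : Type*} [Fintype V] [DecidableEq V] (G : SimpleGraph V)
    [DecidableRel G.Adj]
    (hdeg : ∀ v, G.degree v = 2 ∨ G.degree v = 3)
    (h2 : ∀ u v, G.Adj u v → ¬ (G.degree u = 2 ∧ G.degree v = 2))
    (h3 : ∀ u, G.degree u = 3 → {w : V | G.Adj u w ∧ G.degree w = 2}.ncard ≤ 1)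
    (hsp : ∀ u, G.degree u = 2 →
      2 ≤ {x : V | G.dist u x = 2 ∧ G.degree x = 3 ∧
            ∀ y, G.Adj x y → G.degree y = 3}.ncard) :
    (30 : ℤ) * Fintype.card V ≤ 22 * G.edgeFinset.card := by
  classical
  -- the amount of charge sent from `x` to `u`
  set f : V → V → ℤ := fun x u =>
    if G.degree x = 3 ∧ (∀ y, G.Adj x y → G.degree y = 3) ∧ G.degree u = 2 ∧ G.dist x u = 2
      then 1
    else if G.degree x = 3 ∧ ¬(∀ y, G.Adj x y → G.degree y = 3) ∧ G.Adj x u ∧ G.degree u = 2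
      then 3 else 0 with hfdef
  have hf0 : ∀ x u, 0 ≤ f x u := by
    intro x u
    simp only [hfdef]
    split_ifs <;> norm_num
  -- special 3-vertices are not adjacent to 2-vertices
  have key : ∀ x : V, (30 : ℤ) ≤ 11 * G.degree x - (∑ u, f x u) + (∑ w, f w x) := by
    intro x
    rcases hdeg x with hx2 | hx3
    · -- x has degree 2 : sent = 0, received ≥ 8
      have hsent : (∑ u, f x u) = 0 := by
        apply Finset.sum_eq_zero
        intro u _
        simp only [hfdef]
        rw [if_neg, if_neg]
        · rintro ⟨h', -⟩; omega
        · rintro ⟨h', -⟩; omega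
      -- neighbors of x are non-special degree-3 vertices
      have hnb : ∀ w, G.Adj x w → G.degree w = 3 ∧ ¬(∀ y, G.Adj w y → G.degree y = 3) := by
        intro w hw
        have hw3 : G.degree w = 3 := by
          rcases hdeg w with h | h
          · exact absurd ⟨hx2, h⟩ (h2 x w hw)
          · exact h
        refine ⟨hw3, fun hall => ?_⟩
        have := hall x hw.symm
        omega
      set A : Finset V := Finset.univ.filter (fun w => G.dist w x = 2 ∧ G.degree w = 3 ∧
          ∀ y, G.Adj w y → G.degree y = 3) with hA
      set B : Finset V := G.neighborFinset x with hB
      have hAcard : 2 ≤ A.card := by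
        have := hsp x hx2
        rw [ncard_eq_filter_card] at this
        convert this using 2
        ext w
        simp only [hA, Finset.mem_filter, Finset.mem_univ, true_and]
        rw [SimpleGraph.dist_comm]
      have hBcard : B.card = 2 := by rw [hB, SimpleGraph.card_neighborFinset_eq_degree]; exact hx2
      have hdisj : Disjoint A B := by
        rw [Finset.disjoint_left]
        intro w hwA hwB
        rw [hA, Finset.mem_filter] at hwA
        rw [hB, SimpleGraph.mem_neighborFinset] at hwB
        exact (hnb w hwB).2 hwA.2.2.2
      have hrecvA : ∀ w ∈ A, f w x = 1 := by
        intro w hw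
        rw [hA, Finset.mem_filter] at hw
        simp only [hfdef]
        rw [if_pos ⟨hw.2.2.1, hw.2.2.2, hx2, hw.2.1⟩]
      have hrecvB : ∀ w ∈ B, f w x = 3 := by
        intro w hw
        rw [hB, SimpleGraph.mem_neighborFinset] at hw
        obtain ⟨hw3, hwns⟩ := hnb w hw
        simp only [hfdef]
        rw [if_neg, if_pos ⟨hw3, hwns, hw.symm, hx2⟩]
        rintro ⟨-, hall, -⟩
        exact hwns hall
      have hrecv : (8 : ℤ) ≤ ∑ w, f w x := by
        have hsub : A ∪ B ⊆ Finset.univ := Finset.subset_univ _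
        have h1 : ∑ w ∈ A ∪ B, f w x ≤ ∑ w, f w x :=
          Finset.sum_le_sum_of_subset_of_nonneg hsub (fun i _ _ => hf0 i x)
        rw [Finset.sum_union hdisj, Finset.sum_congr rfl hrecvA,
          Finset.sum_congr rfl hrecvB, Finset.sum_const, Finset.sum_const] at h1
        have : (8 : ℤ) ≤ A.card • (1 : ℤ) + B.card • (3 : ℤ) := by
          simp only [nsmul_eq_mul, hBcard]
          push_cast
          omega
        omega
      rw [hsent, hx2]
      omega
    · by_cases hS : ∀ y, G.Adj x y → G.degree y = 3
      · -- special 3-vertex : sends at most 3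
        have hrecv : (0 : ℤ) ≤ ∑ w, f w x := Finset.sum_nonneg (fun w _ => hf0 w x)
        set S : Finset V := Finset.univ.filter (fun u => G.degree u = 2 ∧ G.dist x u = 2)
          with hSdef
        have hsent : (∑ u, f x u) = S.card := by
          rw [hSdef]
          rw [Finset.card_filter]
          push_cast
          apply Finset.sum_congr rfl
          intro u _
          simp only [hfdef]
          by_cases hu : G.degree u = 2 ∧ G.dist x u = 2
          · rw [if_pos ⟨hx3, hS, hu.1, hu.2⟩, if_pos hu]
          · rw [if_neg, if_neg, if_neg hu]
            · rintro ⟨-, hns, -⟩; exact hns hS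
            · rintro ⟨-, -, h1, h22⟩; exact hu ⟨h1, h22⟩
        have hScard : S.card ≤ 3 := by
          have hsub : S ⊆ (G.neighborFinset x).biUnion
              (fun w => Finset.univ.filter (fun u => G.Adj w u ∧ G.degree u = 2)) := by
            intro u hu
            rw [hSdef, Finset.mem_filter] at hu
            obtain ⟨w, hxw, hwu⟩ := exists_mid G hu.2.2
            rw [Finset.mem_biUnion]
            exact ⟨w, by rwa [SimpleGraph.mem_neighborFinset],
              by simp [hwu, hu.2.1]⟩
          calc S.card ≤ _ := Finset.card_le_card hsub
            _ ≤ ∑ w ∈ G.neighborFinset x,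
                (Finset.univ.filter (fun u => G.Adj w u ∧ G.degree u = 2)).card :=
              Finset.card_biUnion_le
            _ ≤ ∑ _w ∈ G.neighborFinset x, 1 := by
              apply Finset.sum_le_sum
              intro w hw
              rw [SimpleGraph.mem_neighborFinset] at hw
              have := h3 w (hS w hw)
              rwa [ncard_eq_filter_card] at this
            _ = 3 := by
              rw [Finset.sum_const, smul_eq_mul, mul_one,
                SimpleGraph.card_neighborFinset_eq_degree, hx3]
        rw [hsent, hx3]
        have : (S.card : ℤ) ≤ 3 := by exact_mod_cast hScard
        omega
      · -- non-special 3-vertex : sends at most 3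
        have hrecv : (0 : ℤ) ≤ ∑ w, f w x := Finset.sum_nonneg (fun w _ => hf0 w x)
        set S : Finset V := Finset.univ.filter (fun u => G.Adj x u ∧ G.degree u = 2)
          with hSdef
        have hsent : (∑ u, f x u) = 3 * S.card := by
          rw [hSdef, Finset.card_filter]
          push_cast
          rw [Finset.mul_sum]
          apply Finset.sum_congr rfl
          intro u _
          simp only [hfdef]
          by_cases hu : G.Adj x u ∧ G.degree u = 2
          · rw [if_neg, if_pos ⟨hx3, hS, hu.1, hu.2⟩, if_pos hu]
            · norm_num
            · rintro ⟨-, hall, -⟩; exact hS hall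
          · rw [if_neg, if_neg, if_neg hu]
            · norm_num
            · rintro ⟨-, -, h1, h22⟩; exact hu ⟨h1, h22⟩
            · rintro ⟨-, hall, -⟩; exact hS hall
        have hScard : S.card ≤ 1 := by
          have := h3 x hx3
          rwa [ncard_eq_filter_card] at this
        rw [hsent, hx3]
        have : (S.card : ℤ) ≤ 1 := by exact_mod_cast hScard
        omega
  have hsum : (30 : ℤ) * Fintype.card V ≤ ∑ x : V, (11 * G.degree x - (∑ u, f x u) + (∑ w, f w x)) := by
    calc (30 : ℤ) * Fintype.card V = ∑ _x : V, (30 : ℤ) := by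
          rw [Finset.sum_const, nsmul_eq_mul, Finset.card_univ]; ring
      _ ≤ _ := Finset.sum_le_sum (fun x _ => key x)
  rw [Finset.sum_add_distrib, Finset.sum_sub_distrib, Finset.sum_comm] at hsum
  have hdegsum : ∑ x : V, (11 : ℤ) * G.degree x = 22 * G.edgeFinset.card := by
    rw [← Finset.mul_sum]
    have := G.sum_degrees_eq_twice_card_edges
    have h' : (∑ v : V, (G.degree v : ℤ)) = 2 * G.edgeFinset.card := by exact_mod_cast this
    rw [h']; ring
  rw [hdegsum] at hsum
  omega

/-- Discharging: if every vertex has degree `2` or `3`, no two `2`-vertices are adjacent,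
every `3`-vertex has at most one `2`-neighbor, and every `2`-vertex has at least two
special `3`-vertices at distance exactly `2`, then `mad(G) ≥ 30/11`; in particular
`2|E(G)| ≥ (30/11)|V(G)|`. -/
theorem stmt11 {V : Type*} [Fintype V] [Nonempty V] [DecidableEq V] (G : SimpleGraph V)
    [DecidableRel G.Adj]
    (hdeg : ∀ v, G.degree v = 2 ∨ G.degree v = 3)
    (h2 : ∀ u v, G.Adj u v → ¬ (G.degree u = 2 ∧ G.degree v = 2))
    (h3 : ∀ u, G.degree u = 3 → {w : V | G.Adj u w ∧ G.degree w = 2}.ncard ≤ 1)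
    (hsp : ∀ u, G.degree u = 2 →
      2 ≤ {x : V | G.dist u x = 2 ∧ G.degree x = 3 ∧
            ∀ y, G.Adj x y → G.degree y = 3}.ncard) :
    ¬ MadLT G (30 / 11) ∧
      (30 / 11 : ℚ) * Fintype.card V ≤ 2 * G.edgeFinset.card := by
  have hmain := main_count G hdeg h2 h3 hsp
  have hq : (30 / 11 : ℚ) * Fintype.card V ≤ 2 * G.edgeFinset.card := by
    rw [div_mul_eq_mul_div, div_le_iff₀ (by norm_num : (0:ℚ) < 11)]
    have : ((30 : ℤ) * Fintype.card V : ℚ) ≤ ((22 : ℤ) * G.edgeFinset.card : ℚ) := by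
      exact_mod_cast hmain
    push_cast at this ⊢
    linarith
  refine ⟨fun hmad => ?_, hq⟩
  have h := hmad ⊤ (by simp [Set.univ_nonempty])
  rw [SimpleGraph.Subgraph.edgeSet_top] at h
  have he : G.edgeSet.ncard = G.edgeFinset.card := by
    rw [Set.ncard_eq_toFinset_card']
    congr 1
  have hv : (⊤ : G.Subgraph).verts.ncard = Fintype.card V := by
    simp [SimpleGraph.Subgraph.verts_top, Set.ncard_univ, Nat.card_eq_fintype_card]
  rw [he, hv] at h
  linarith
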